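/- Let A, B, D be linear maps on ℂⁿ ⊗ ℂⁿ with A invertible, satisfying the Yang–Baxter-type relation A₁₂ B₁₃ D₂₃ = D₂₃ B₁₃ A₁₂ on ℂⁿ ⊗ ℂⁿ ⊗ ℂⁿ (where X₁₂ = X ⊗ id, X₂₃ = id ⊗ X, and X₁₃ acts on the first and third factors). Then for every N ≥ 1 the corresponding transfer matrices commute: t(B) ∘ t(D) = t(D) ∘ t(B). In particular, for a family R(λ) of solutions of the quantum Yang–Baxter equation with spectral parameter such that R(λ−μ) is invertible, the transfer matrices t(R(λ)) and t(R(μ)) commute, yielding a family of commuting conserved quantities. -/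

import Mathlib

/-!
STATEMENT 7: If A, B, D are linear maps on ℂⁿ ⊗ ℂⁿ with A invertible satisfying
A₁₂ B₁₃ D₂₃ = D₂₃ B₁₃ A₁₂, then for every N ≥ 1 the transfer matrices commute:
t(B) ∘ t(D) = t(D) ∘ t(B).

Operators are represented by their matrices in the standard product bases
(output index first, so matrix multiplication is composition).
-/

open Complex Matrix

/-- `X ⊗ id` acting on the first two factors of ℂⁿ ⊗ ℂⁿ ⊗ ℂⁿ. -/
noncomputable def leg12 {n : ℕ} (R : Matrix (Fin n × Fin n) (Fin n × Fin n) ℂ) :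
    Matrix (Fin n × Fin n × Fin n) (Fin n × Fin n × Fin n) ℂ :=
  fun p q => R (p.1, p.2.1) (q.1, q.2.1) * (if p.2.2 = q.2.2 then 1 else 0)

/-- `id ⊗ X` acting on the last two factors of ℂⁿ ⊗ ℂⁿ ⊗ ℂⁿ. -/
noncomputable def leg23 {n : ℕ} (R : Matrix (Fin n × Fin n) (Fin n × Fin n) ℂ) :
    Matrix (Fin n × Fin n × Fin n) (Fin n × Fin n × Fin n) ℂ :=
  fun p q => (if p.1 = q.1 then 1 else 0) * R (p.2.1, p.2.2) (q.2.1, q.2.2)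

/-- `X` acting on the first and third factors of ℂⁿ ⊗ ℂⁿ ⊗ ℂⁿ. -/
noncomputable def leg13 {n : ℕ} (R : Matrix (Fin n × Fin n) (Fin n × Fin n) ℂ) :
    Matrix (Fin n × Fin n × Fin n) (Fin n × Fin n × Fin n) ℂ :=
  fun p q => R (p.1, p.2.2) (q.1, q.2.2) * (if p.2.1 = q.2.1 then 1 else 0)

/-- The transfer matrix `t(R)` on (ℂⁿ)^{⊗N}, with entries
`t_{i₁⋯i_N}^{j₁⋯j_N} = Σ_b ∏_k R_{(b_k, i_k)}^{(b_{k+1}, j_k)}` (indices mod N);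
here `R (b,j) (a,i) = R_{(a,i)}^{(b,j)}` (output index first). -/
noncomputable def transfer {n : ℕ} (N : ℕ) [NeZero N]
    (R : Matrix (Fin n × Fin n) (Fin n × Fin n) ℂ) :
    Matrix (ZMod N → Fin n) (ZMod N → Fin n) ℂ :=
  fun j i => ∑ b : ZMod N → Fin n, ∏ k : ZMod N, R (b (k + 1), j k) (b k, i k)

/-! ### Auxiliary machinery -/

/-- The "cyclic trace" of a family of auxiliary-space matrices. -/
noncomputable def cyc {α : Type*} [Fintype α] (N : ℕ) [NeZero N]
    (L : ZMod N → Matrix α α ℂ) : ℂ :=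
  ∑ b : ZMod N → α, ∏ k : ZMod N, L k (b (k + 1)) (b k)

lemma cyc_shift {α : Type*} [Fintype α] (N : ℕ) [NeZero N]
    (F : ZMod N → α → α → ℂ) :
    ∑ b : ZMod N → α, ∏ k : ZMod N, F k (b (k + 1)) (b k)
      = ∑ c : ZMod N → α, ∏ k : ZMod N, F k (c k) (c (k - 1)) := by
  apply Fintype.sum_bijective (fun b : ZMod N → α => fun k => b (k + 1))
  · exact (Equiv.arrowCongr (Equiv.addRight (1 : ZMod N)) (Equiv.refl α)).symm.bijective
  · intro b
    exact Finset.prod_congr rfl fun k _ => by simp [sub_add_cancel]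

/-- The cyclic trace is invariant under a site-independent conjugation of the
auxiliary space. -/
lemma cyc_conj {α : Type*} [Fintype α] [DecidableEq α] (N : ℕ) [NeZero N]
    (G H : Matrix α α ℂ) (hGH : G * H = 1) (L : ZMod N → Matrix α α ℂ) :
    cyc N (fun k => H * L k * G) = cyc N L := by
  unfold cyc
  have expand : ∀ (M : Matrix α α ℂ) (x y : α),
      (H * M * G) x y = ∑ p : α × α, H x p.1 * M p.1 p.2 * G p.2 y := by
    intro M x y
    rw [Matrix.mul_apply, Fintype.sum_prod_type, Finset.sum_comm]
    refine Finset.sum_congr rfl fun e _ => ?_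
    rw [Matrix.mul_apply, Finset.sum_mul]
  calc ∑ b : ZMod N → α, ∏ k : ZMod N, (H * L k * G) (b (k+1)) (b k)
      = ∑ b : ZMod N → α, ∑ q : ZMod N → α × α,
          ∏ k : ZMod N, (H (b (k+1)) (q k).1 * L k (q k).1 (q k).2 * G (q k).2 (b k)) := by
        refine Finset.sum_congr rfl fun b _ => ?_
        simp only [expand]
        exact Fintype.prod_sum _
    _ = ∑ q : ZMod N → α × α, (∏ k : ZMod N, L k (q k).1 (q k).2) *
          ∑ b : ZMod N → α, ∏ k : ZMod N, (G (q k).2 (b k) * H (b k) (q (k-1)).1) := by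
        rw [Finset.sum_comm]
        refine Finset.sum_congr rfl fun q _ => ?_
        rw [Finset.mul_sum]
        refine Finset.sum_congr rfl fun b _ => ?_
        have hs : ∏ k : ZMod N, (H (b (k+1)) (q k).1 * L k (q k).1 (q k).2 * G (q k).2 (b k))
            = (∏ k : ZMod N, H (b (k+1)) (q k).1) *
              ∏ k : ZMod N, (L k (q k).1 (q k).2 * G (q k).2 (b k)) := by
          rw [← Finset.prod_mul_distrib]
          exact Finset.prod_congr rfl fun k _ => by ring
        rw [hs]
        have hshift : (∏ k : ZMod N, H (b (k+1)) (q k).1)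
            = ∏ k : ZMod N, H (b k) (q (k-1)).1 := by
          apply Fintype.prod_bijective (fun k : ZMod N => k + 1)
            (Equiv.addRight (1 : ZMod N)).bijective
          intro k; simp [add_sub_cancel_right]
        rw [hshift, ← Finset.prod_mul_distrib]
        rw [show (∏ k : ZMod N, L k (q k).1 (q k).2) *
            ∏ k : ZMod N, (G (q k).2 (b k) * H (b k) (q (k-1)).1)
            = ∏ k : ZMod N, (L k (q k).1 (q k).2 * (G (q k).2 (b k) * H (b k) (q (k-1)).1))
          from (Finset.prod_mul_distrib).symm]
        exact Finset.prod_congr rfl fun k _ => by ring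
    _ = ∑ q : ZMod N → α × α, (∏ k : ZMod N, L k (q k).1 (q k).2) *
          ∏ k : ZMod N, (if (q k).2 = (q (k-1)).1 then (1:ℂ) else 0) := by
        refine Finset.sum_congr rfl fun q _ => ?_
        congr 1
        rw [← Fintype.prod_sum (fun (k : ZMod N) (p : α) => G (q k).2 p * H p (q (k-1)).1)]
        refine Finset.prod_congr rfl fun k _ => ?_
        rw [← Matrix.mul_apply, hGH, Matrix.one_apply]
    _ = ∑ c : ZMod N → α, ∏ k : ZMod N, L k (c k) (c (k-1)) := by
        rw [← Equiv.sum_comp (Equiv.arrowProdEquivProdArrow (ZMod N) (fun _ => α) (fun _ => α)).symm]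
        rw [Fintype.sum_prod_type]
        beta_reduce
        refine Finset.sum_congr rfl fun c _ => ?_
        simp only [Equiv.arrowProdEquivProdArrow, Equiv.coe_fn_symm_mk]
        show (∑ y : ZMod N → α, (∏ k : ZMod N, L k (c k) (y k)) *
          ∏ k : ZMod N, (if y k = c (k-1) then (1:ℂ) else 0)) = _
        have hc : ∀ y : ZMod N → α,
            (if (∀ k : ZMod N, y k = c (k-1)) then (1:ℂ) else 0)
              = if y = fun k => c (k-1) then 1 else 0 := by
          intro y; simp [funext_iff]
        simp only [Fintype.prod_boole, hc, mul_ite, mul_one, mul_zero]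
        rw [Finset.sum_ite_eq' Finset.univ (fun k : ZMod N => c (k-1))
          (fun y => ∏ k : ZMod N, L k (c k) (y k))]
        simp
    _ = ∑ b : ZMod N → α, ∏ k : ZMod N, L k (b (k+1)) (b k) := (cyc_shift N _).symm

/-- The cyclic trace is invariant under relabelling the auxiliary space. -/
lemma cyc_reindex {α : Type*} [Fintype α] (N : ℕ) [NeZero N] (e : α ≃ α)
    (L : ZMod N → Matrix α α ℂ) :
    cyc N (fun k => fun p q => L k (e p) (e q)) = cyc N L := by
  unfold cyc
  apply Fintype.sum_bijective (fun g : ZMod N → α => fun k => e (g k))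
  · exact (Equiv.arrowCongr (Equiv.refl (ZMod N)) e).bijective
  · intro g
    exact Finset.prod_congr rfl fun k _ => rfl

/-- The site matrix (on the doubled auxiliary space) for `t(B) * t(D)`. -/
noncomputable def LS {n : ℕ} (B D : Matrix (Fin n × Fin n) (Fin n × Fin n) ℂ) (j i : Fin n) :
    Matrix (Fin n × Fin n) (Fin n × Fin n) ℂ :=
  fun p q => ∑ m : Fin n, B (p.1, j) (q.1, m) * D (p.2, m) (q.2, i)

/-- The site matrix (on the doubled auxiliary space) for `t(D) * t(B)`,
with the two auxiliary factors kept in the `(B, D)` order. -/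
noncomputable def LS' {n : ℕ} (B D : Matrix (Fin n × Fin n) (Fin n × Fin n) ℂ) (j i : Fin n) :
    Matrix (Fin n × Fin n) (Fin n × Fin n) ℂ :=
  fun p q => ∑ m : Fin n, D (p.2, j) (q.2, m) * B (p.1, m) (q.1, i)

lemma l12_mul {n : ℕ} (A : Matrix (Fin n × Fin n) (Fin n × Fin n) ℂ)
    (M : Matrix (Fin n × Fin n × Fin n) (Fin n × Fin n × Fin n) ℂ)
    (p q : Fin n × Fin n × Fin n) :
    (leg12 A * M) p q = ∑ r : Fin n × Fin n, A (p.1, p.2.1) r * M (r.1, r.2, p.2.2) q := by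
  rw [Matrix.mul_apply, Fintype.sum_prod_type]
  simp only [Fintype.sum_prod_type, leg12, mul_ite, mul_one, mul_zero, ite_mul, zero_mul]
  simp [Finset.sum_ite_eq]

lemma mul_l12 {n : ℕ} (A : Matrix (Fin n × Fin n) (Fin n × Fin n) ℂ)
    (M : Matrix (Fin n × Fin n × Fin n) (Fin n × Fin n × Fin n) ℂ)
    (p q : Fin n × Fin n × Fin n) :
    (M * leg12 A) p q = ∑ r : Fin n × Fin n, M p (r.1, r.2, q.2.2) * A r (q.1, q.2.1) := by
  rw [Matrix.mul_apply, Fintype.sum_prod_type]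
  simp only [Fintype.sum_prod_type, leg12, mul_ite, mul_one, mul_zero, ite_mul, zero_mul]
  simp [Finset.sum_ite_eq']

lemma l13_mul_l23 {n : ℕ} (B D : Matrix (Fin n × Fin n) (Fin n × Fin n) ℂ)
    (p q : Fin n × Fin n × Fin n) :
    (leg13 B * leg23 D) p q
      = ∑ m : Fin n, B (p.1, p.2.2) (q.1, m) * D (p.2.1, m) (q.2.1, q.2.2) := by
  rw [Matrix.mul_apply, Fintype.sum_prod_type]
  simp only [Fintype.sum_prod_type, leg13, leg23, mul_ite, mul_one, mul_zero, ite_mul,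
    zero_mul, one_mul]
  simp [Finset.sum_ite_eq, Finset.sum_ite_eq']

lemma l23_mul_l13 {n : ℕ} (B D : Matrix (Fin n × Fin n) (Fin n × Fin n) ℂ)
    (p q : Fin n × Fin n × Fin n) :
    (leg23 D * leg13 B) p q
      = ∑ m : Fin n, D (p.2.1, p.2.2) (q.2.1, m) * B (p.1, m) (q.1, q.2.2) := by
  rw [Matrix.mul_apply, Fintype.sum_prod_type]
  simp only [Fintype.sum_prod_type, leg13, leg23, mul_ite, mul_one, mul_zero, ite_mul,
    zero_mul, one_mul]
  simp [Finset.sum_ite_eq, Finset.sum_ite_eq']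

/-- The Yang–Baxter relation, recast on the doubled auxiliary space. -/
lemma yb_key {n : ℕ} (A B D : Matrix (Fin n × Fin n) (Fin n × Fin n) ℂ)
    (hYB : leg12 A * leg13 B * leg23 D = leg23 D * leg13 B * leg12 A) (j i : Fin n) :
    A * LS B D j i = LS' B D j i * A := by
  ext p q
  have h := congrFun (congrFun hYB (p.1, p.2, j)) (q.1, q.2, i)
  rw [mul_assoc] at h
  rw [l12_mul, mul_l12] at h
  simp only [l13_mul_l23, l23_mul_l13] at h
  rw [Matrix.mul_apply, Matrix.mul_apply]
  simp only [LS, LS']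
  convert h using 2

/-- Entries of a product of transfer matrices as a cyclic trace over the
doubled auxiliary space. -/
lemma transfer_mul_entry {n : ℕ} (N : ℕ) [NeZero N]
    (B D : Matrix (Fin n × Fin n) (Fin n × Fin n) ℂ) (j i : ZMod N → Fin n) :
    (transfer N B * transfer N D) j i = cyc N (fun k => LS B D (j k) (i k)) := by
  rw [Matrix.mul_apply]
  simp only [transfer]
  calc ∑ m : ZMod N → Fin n, (∑ b : ZMod N → Fin n, ∏ k : ZMod N, B (b (k+1), j k) (b k, m k)) *
        ∑ d : ZMod N → Fin n, ∏ k : ZMod N, D (d (k+1), m k) (d k, i k)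
      = ∑ b : ZMod N → Fin n, ∑ d : ZMod N → Fin n, ∑ m : ZMod N → Fin n,
          (∏ k : ZMod N, B (b (k+1), j k) (b k, m k)) *
            ∏ k : ZMod N, D (d (k+1), m k) (d k, i k) := by
        simp only [Finset.sum_mul, Finset.mul_sum]
        refine Eq.trans (b := ∑ m : ZMod N → Fin n, ∑ b : ZMod N → Fin n,
            ∑ d : ZMod N → Fin n, (∏ k : ZMod N, B (b (k+1), j k) (b k, m k)) *
            ∏ k : ZMod N, D (d (k+1), m k) (d k, i k))
          (Finset.sum_congr rfl fun m _ => Finset.sum_comm)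
          (Finset.sum_comm.trans (Finset.sum_congr rfl fun b _ => Finset.sum_comm))
    _ = ∑ b : ZMod N → Fin n, ∑ d : ZMod N → Fin n, ∏ k : ZMod N,
          ∑ m : Fin n, B (b (k+1), j k) (b k, m) * D (d (k+1), m) (d k, i k) := by
        refine Finset.sum_congr rfl fun b _ => Finset.sum_congr rfl fun d _ => ?_
        rw [Fintype.prod_sum
          (fun (k : ZMod N) (m : Fin n) => B (b (k+1), j k) (b k, m) * D (d (k+1), m) (d k, i k))]
        exact Finset.sum_congr rfl fun m _ => (Finset.prod_mul_distrib).symm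
    _ = cyc N (fun k => LS B D (j k) (i k)) := by
        unfold cyc
        rw [← Equiv.sum_comp (Equiv.arrowProdEquivProdArrow (ZMod N) (fun _ => Fin n) (fun _ => Fin n)).symm,
          Fintype.sum_prod_type]
        refine Finset.sum_congr rfl fun b _ => Finset.sum_congr rfl fun d _ => ?_
        simp only [Equiv.arrowProdEquivProdArrow, Equiv.coe_fn_symm_mk, LS]

theorem transfer_matrices_commute {n : ℕ} (A B D : Matrix (Fin n × Fin n) (Fin n × Fin n) ℂ)
    (hA : IsUnit A)
    (hYB : leg12 A * leg13 B * leg23 D = leg23 D * leg13 B * leg12 A)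
    (N : ℕ) [NeZero N] :
    transfer N B * transfer N D = transfer N D * transfer N B := by
  obtain ⟨u, hu⟩ := hA
  set A' : Matrix (Fin n × Fin n) (Fin n × Fin n) ℂ := ↑u⁻¹ with hA'
  have hAA' : A * A' = 1 := by rw [← hu, hA']; exact_mod_cast u.mul_inv
  have hA'A : A' * A = 1 := by rw [← hu, hA']; exact_mod_cast u.inv_mul
  have hconj : ∀ j i : Fin n, LS B D j i = A' * LS' B D j i * A := by
    intro j i
    have h := yb_key A B D hYB j i
    calc LS B D j i = (A' * A) * LS B D j i := by rw [hA'A, one_mul]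
      _ = A' * (A * LS B D j i) := by rw [mul_assoc]
      _ = A' * (LS' B D j i * A) := by rw [h]
      _ = A' * LS' B D j i * A := by rw [mul_assoc]
  have hswap : ∀ (j i : ZMod N → Fin n),
      cyc N (fun k => LS D B (j k) (i k)) = cyc N (fun k => LS' B D (j k) (i k)) := by
    intro j i
    have := cyc_reindex N (Equiv.prodComm (Fin n) (Fin n))
      (fun k => LS D B (j k) (i k))
    rw [← this]
    rfl
  ext j i
  rw [transfer_mul_entry, transfer_mul_entry, hswap]
  calc cyc N (fun k => LS B D (j k) (i k))
      = cyc N (fun k => A' * LS' B D (j k) (i k) * A) := by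
        congr 1; funext k; exact hconj (j k) (i k)
    _ = cyc N (fun k => LS' B D (j k) (i k)) := cyc_conj N A A' hAA' _
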